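/- Correctness of the ∃-quantifier construction: let A₁ = MH(A_{φ₁}) = (Q₁, q_{0,1}, Sⁿ⁺¹×Σⁿ⁺¹, ρ₁, F₁) be a nondeterministic Büchi automaton T-equivalent to φ₁ (with n+1 path components), and let A_φ over alphabet Sⁿ×Σⁿ have states Q₁×S×Σ plus a fresh initial state, where a run guesses and simulates an additional path of the KTS T in its state (the S-component tracking the current state of the guessed path, the Σ-component the next atomic program, validated against the transition relations δ_σ, starting at the state Π(ε)(0) branched from). Then for every path assignment Π with |dom(Π)| = n: ν(Π) ∈ L(A_φ) if and only if there exists p ∈ Paths(T, Π(ε)(0)) such that Π[π_{n+1} → p, ε → p] ⊨_T φ₁, i.e. A_φ is T-equivalent to ∃π.φ₁. -/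
import Mathlib


/-- A Kripke transition system with atomic propositions `AP`, atomic programs `P`,
and states `S`; every state has an outgoing transition. -/
structure KTS (AP P S : Type) where
  s0 : S
  δ : P → Set (S × S)
  L : S → Set AP
  nodead : ∀ s, ∃ s' σ, (s, s') ∈ δ σ

/-- An infinite alternating sequence of states and atomic programs. -/
structure HPath (S P : Type) where
  st : ℕ → S
  pr : ℕ → P

/-- `p` is a path of the KTS `K` (every step uses a transition of the labelling program). -/
def IsPath {AP P S : Type} (K : KTS AP P S) (p : HPath S P) : Prop :=
  ∀ j, (p.st j, p.st (j + 1)) ∈ K.δ (p.pr j)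

/-- `p` is a path of `K` starting in state `s`. -/
def IsPathFrom {AP P S : Type} (K : KTS AP P S) (s : S) (p : HPath S P) : Prop :=
  IsPath K p ∧ p.st 0 = s

/-- `p` is a suffix of a path of `K` starting in the initial state, i.e. a valid path
whose first state is reachable from `s₀`. -/
def IsPathSuffix {AP P S : Type} (K : KTS AP P S) (p : HPath S P) : Prop :=
  IsPath K p ∧ ∃ (m : ℕ) (f : ℕ → S) (g : ℕ → P), f 0 = K.s0 ∧ f m = p.st 0 ∧
    ∀ j < m, (f j, f (j + 1)) ∈ K.δ (g j)

/-- The ω-word over `Sⁿ × Σⁿ` obtained by zipping the paths of a path assignment. -/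
def nu {S P : Type} {n : ℕ} (Pa : Fin n → HPath S P) : ℕ → (Fin n → S) × (Fin n → P) :=
  fun k => (fun l => (Pa l).st k, fun l => (Pa l).pr k)

/-- A nondeterministic Büchi automaton. -/
structure NBA (A : Type) where
  Q : Type
  fin : Fintype Q
  q0 : Q
  δ : Q → A → Set Q
  F : Set Q

/-- The ω-language of an NBA. -/
def NBA.Lang {A : Type} (M : NBA A) : Set (ℕ → A) :=
  {w | ∃ r : ℕ → M.Q, r 0 = M.q0 ∧ (∀ k, r (k + 1) ∈ M.δ (r k) (w k)) ∧
    ∀ N, ∃ k ≥ N, r k ∈ M.F}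

/-- The automaton `A_φ` for `∃π. φ₁`: it simulates the dealternised automaton `M` for
`φ₁` over `n+1` path components while guessing and validating an additional path of the
KTS `K` in its state (current state of the guessed path and next atomic program),
branching from the most recently quantified path (component `n-1`). -/
def existsAut {AP P S : Type} [Fintype S] [Fintype P] (K : KTS AP P S) {n : ℕ}
    (hn : 0 < n) (M : NBA ((Fin (n + 1) → S) × (Fin (n + 1) → P))) :
    NBA ((Fin n → S) × (Fin n → P)) where
  Q := Option (M.Q × S × P)
  fin := by have := M.fin; infer_instance
  q0 := none
  δ q a :=
    match q with
    | none => {x | ∃ q' s' σ σ', x = some (q', s', σ') ∧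
        q' ∈ M.δ M.q0 (Fin.snoc a.1 (a.1 ⟨n - 1, by omega⟩), Fin.snoc a.2 σ) ∧
        (a.1 ⟨n - 1, by omega⟩, s') ∈ K.δ σ}
    | some (q, s, σ) => {x | ∃ q' s' σ', x = some (q', s', σ') ∧
        q' ∈ M.δ q (Fin.snoc a.1 s, Fin.snoc a.2 σ) ∧ (s, s') ∈ K.δ σ}
  F := {x | ∃ q s σ, x = some (q, s, σ) ∧ q ∈ M.F}

lemma nu_snoc' {S P : Type} {n : ℕ} (Pa : Fin n → HPath S P) (p : HPath S P) (k : ℕ) :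
    nu (Fin.snoc Pa p) k =
      (Fin.snoc (nu Pa k).1 (p.st k), Fin.snoc (nu Pa k).2 (p.pr k)) := by
  unfold nu
  refine Prod.ext ?_ ?_ <;> funext l <;>
    induction l using Fin.lastCases <;> simp

lemma snoc_suffix' {AP P S : Type} (K : KTS AP P S) {n : ℕ} (Pa : Fin n → HPath S P)
    (p : HPath S P) (hPa : ∀ l, IsPathSuffix K (Pa l)) (hp : IsPath K p) (l0 : Fin n)
    (h0 : p.st 0 = (Pa l0).st 0) :
    ∀ l : Fin (n + 1), IsPathSuffix K ((Fin.snoc Pa p : Fin (n + 1) → HPath S P) l) := by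
  intro l
  induction l using Fin.lastCases with
  | last =>
    rw [Fin.snoc_last]
    refine ⟨hp, ?_⟩
    obtain ⟨-, m, f, g, hf0, hfm, hst⟩ := hPa l0
    exact ⟨m, f, g, hf0, hfm.trans h0.symm, hst⟩
  | cast l => rw [Fin.snoc_castSucc]; exact hPa l

/-- **Correctness of the `∃`-quantifier construction**: if the nondeterministic Büchi
automaton `M` (over `n+1` path components) is `K`-equivalent to the property `φ₁` of
path assignments, then for every path assignment `Π` with `n` components,
`ν(Π) ∈ L(A_φ)` iff there is a path `p` of `K` starting in `Π(ε)(0)` such that the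
extended assignment `Π[π_{n+1} → p, ε → p]` satisfies `φ₁`; i.e. `A_φ` is
`K`-equivalent to `∃π. φ₁`. -/
theorem existsAut_correct {AP P S : Type} [Fintype S] [Fintype P] (K : KTS AP P S)
    {n : ℕ} (hn : 0 < n) (M : NBA ((Fin (n + 1) → S) × (Fin (n + 1) → P)))
    (φ1 : (Fin (n + 1) → HPath S P) → Prop)
    (heq : ∀ Pa : Fin (n + 1) → HPath S P, (∀ l, IsPathSuffix K (Pa l)) →
      (nu Pa ∈ M.Lang ↔ φ1 Pa)) :
    ∀ Pa : Fin n → HPath S P, (∀ l, IsPathSuffix K (Pa l)) →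
      (nu Pa ∈ (existsAut K hn M).Lang ↔
        ∃ p : HPath S P, IsPathFrom K ((Pa ⟨n - 1, by omega⟩).st 0) p ∧
          φ1 (Fin.snoc Pa p)) := by
  intro Pa hPa
  constructor
  · rintro ⟨r, hr0, hstep, hacc⟩
    have hsome : ∀ k, ∃ q s σ, r (k + 1) = some (q, s, σ) := by
      intro k
      have h := hstep k
      cases hrk : r k with
      | none =>
        rw [hrk] at h
        obtain ⟨q', s', σ, σ', hx, -, -⟩ := h
        exact ⟨q', s', σ', hx⟩
      | some qsσ =>
        obtain ⟨q, s, σ⟩ := qsσ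
        rw [hrk] at h
        obtain ⟨q', s', σ', hx, -, -⟩ := h
        exact ⟨q', s', σ', hx⟩
    choose qf sf σf hf using hsome
    have h0 := hstep 0
    rw [hr0] at h0
    obtain ⟨q1, s1, σ0, σ1, hx0, hq0, hδ0⟩ := h0
    rw [hf 0] at hx0
    obtain ⟨hq1, hs1, hσ1⟩ : qf 0 = q1 ∧ sf 0 = s1 ∧ σf 0 = σ1 := by simpa using hx0
    subst hq1; subst hs1; subst hσ1
    have hstep' : ∀ k, qf (k+1) ∈ M.δ (qf k)
          (Fin.snoc (nu Pa (k+1)).1 (sf k), Fin.snoc (nu Pa (k+1)).2 (σf k))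
        ∧ (sf k, sf (k+1)) ∈ K.δ (σf k) := by
      intro k
      have h := hstep (k + 1)
      rw [hf k] at h
      obtain ⟨q', s', σ', hx, hq, hδ⟩ := h
      rw [hf (k+1)] at hx
      obtain ⟨h1, h2, h3⟩ : qf (k+1) = q' ∧ sf (k+1) = s' ∧ σf (k+1) = σ' := by simpa using hx
      subst h1; subst h2; subst h3
      exact ⟨hq, hδ⟩
    let p : HPath S P :=
      ⟨fun k => Nat.rec ((Pa ⟨n - 1, by omega⟩).st 0) (fun k _ => sf k) k,
       fun k => Nat.rec σ0 (fun k _ => σf k) k⟩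
    have hpath : IsPath K p := by
      intro j
      cases j with
      | zero => exact hδ0
      | succ k => exact (hstep' k).2
    have hsuffix : ∀ l : Fin (n + 1), IsPathSuffix K ((Fin.snoc Pa p : Fin (n + 1) → HPath S P) l) :=
      snoc_suffix' K Pa p hPa hpath ⟨n - 1, by omega⟩ rfl
    refine ⟨p, ⟨hpath, rfl⟩, (heq _ hsuffix).mp ?_⟩
    refine ⟨fun k => Nat.rec M.q0 (fun k _ => qf k) k, rfl, ?_, ?_⟩
    · intro k
      cases k with
      | zero =>
        rw [nu_snoc']
        exact hq0
      | succ k =>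
        rw [nu_snoc']
        exact (hstep' k).1
    · intro N
      obtain ⟨k, hk, hkF⟩ := hacc (N + 1)
      obtain ⟨k, rfl⟩ : ∃ k', k = k' + 1 := ⟨k - 1, by omega⟩
      obtain ⟨q, s, σ, hx, hqF⟩ := hkF
      rw [hf k] at hx
      obtain ⟨h1, -, -⟩ : qf k = q ∧ sf k = s ∧ σf k = σ := by simpa using hx
      refine ⟨k + 1, by omega, ?_⟩
      show qf k ∈ M.F
      rw [h1]; exact hqF
  · rintro ⟨p, ⟨hpath, hp0⟩, hφ⟩
    have hsuffix : ∀ l : Fin (n + 1), IsPathSuffix K ((Fin.snoc Pa p : Fin (n + 1) → HPath S P) l) :=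
      snoc_suffix' K Pa p hPa hpath ⟨n - 1, by omega⟩ hp0
    obtain ⟨q, hq0, hqstep, hqacc⟩ := (heq _ hsuffix).mpr hφ
    refine ⟨fun k => Nat.rec none (fun k _ => some (q (k+1), p.st (k+1), p.pr (k+1))) k,
      rfl, ?_, ?_⟩
    · intro k
      cases k with
      | zero =>
        refine ⟨q 1, p.st 1, p.pr 0, p.pr 1, rfl, ?_, ?_⟩
        · show q 1 ∈ M.δ M.q0
            (Fin.snoc (nu Pa 0).1 ((Pa ⟨n - 1, by omega⟩).st 0), Fin.snoc (nu Pa 0).2 (p.pr 0))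
          rw [← hp0]
          have h := hqstep 0
          rw [hq0, nu_snoc'] at h
          exact h
        · show ((Pa ⟨n - 1, by omega⟩).st 0, p.st 1) ∈ K.δ (p.pr 0)
          rw [← hp0]
          exact hpath 0
      | succ k =>
        refine ⟨q (k+2), p.st (k+2), p.pr (k+2), rfl, ?_, hpath (k+1)⟩
        have h := hqstep (k+1)
        rw [nu_snoc'] at h
        exact h
    · intro N
      obtain ⟨k, hk, hkF⟩ := hqacc (N + 1)
      obtain ⟨k, rfl⟩ : ∃ k', k = k' + 1 := ⟨k - 1, by omega⟩
      exact ⟨k + 1, by omega, ⟨q (k+1), p.st (k+1), p.pr (k+1), rfl, hkF⟩⟩
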